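/- Let A be an associative unital algebra over ℂ with a full comultiplication Δ, and assume there exist a faithful left integral φ and a faithful right integral on A. If elements a₁, …, aₙ, b₁, …, bₙ ∈ A satisfy Σᵢ (id ⊗ φ)(Δ(aᵢ)(1 ⊗ bᵢ)) = 0, then Σᵢ φ(aᵢbᵢ) = 0. -/

import Mathlib

open TensorProduct

noncomputable section

variable {A : Type*} [Ring A] [Algebra ℂ A]

/-- The slice map `id ⊗ ω : A ⊗ A → A`. -/
def sliceR (ω : A →ₗ[ℂ] ℂ) : A ⊗[ℂ] A →ₗ[ℂ] A :=
  (TensorProduct.rid ℂ A).toLinearMap ∘ₗ TensorProduct.map LinearMap.id ω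

/-- The slice map `ω ⊗ id : A ⊗ A → A`. -/
def sliceL (ω : A →ₗ[ℂ] ℂ) : A ⊗[ℂ] A →ₗ[ℂ] A :=
  (TensorProduct.lid ℂ A).toLinearMap ∘ₗ TensorProduct.map ω LinearMap.id

/-- Coassociativity of a comultiplication `Δ : A → A ⊗ A`:
`(Δ ⊗ id) ∘ Δ = (id ⊗ Δ) ∘ Δ` (up to the associator). -/
def IsCoassoc (Δ : A →ₐ[ℂ] A ⊗[ℂ] A) : Prop :=
  ∀ a : A,
    TensorProduct.assoc ℂ A A A (TensorProduct.map Δ.toLinearMap LinearMap.id (Δ a)) =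
      TensorProduct.map LinearMap.id Δ.toLinearMap (Δ a)

/-- A left integral: a nonzero functional with `(id ⊗ φ)(Δ a) = φ(a)·1` for all `a`. -/
def IsLeftIntegral (Δ : A →ₐ[ℂ] A ⊗[ℂ] A) (φ : A →ₗ[ℂ] ℂ) : Prop :=
  φ ≠ 0 ∧ ∀ a : A, sliceR φ (Δ a) = φ a • (1 : A)

/-- A right integral: a nonzero functional with `(ψ ⊗ id)(Δ a) = ψ(a)·1` for all `a`. -/
def IsRightIntegral (Δ : A →ₐ[ℂ] A ⊗[ℂ] A) (ψ : A →ₗ[ℂ] ℂ) : Prop :=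
  ψ ≠ 0 ∧ ∀ a : A, sliceL ψ (Δ a) = ψ a • (1 : A)

/-- A faithful functional: the bilinear form `(a, b) ↦ ω(ab)` is non-degenerate. -/
def IsFaithful (ω : A →ₗ[ℂ] ℂ) : Prop :=
  (∀ b : A, (∀ a : A, ω (a * b) = 0) → b = 0) ∧
  (∀ b : A, (∀ a : A, ω (b * a) = 0) → b = 0)

/-- The left leg of an element `x ∈ A ⊗ A`: the span of `{(id ⊗ ω)(x) : ω ∈ A*}`. -/
def leftLegOf (x : A ⊗[ℂ] A) : Submodule ℂ A :=
  Submodule.span ℂ {y : A | ∃ ω : A →ₗ[ℂ] ℂ, y = sliceR ω x}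

/-- The right leg of an element `x ∈ A ⊗ A`: the span of `{(ω ⊗ id)(x) : ω ∈ A*}`. -/
def rightLegOf (x : A ⊗[ℂ] A) : Submodule ℂ A :=
  Submodule.span ℂ {y : A | ∃ ω : A →ₗ[ℂ] ℂ, y = sliceL ω x}

/-- The left leg of `Δ`: the span of `{(id ⊗ ω)(Δ a) : a ∈ A, ω ∈ A*}`. -/
def leftLeg (Δ : A →ₐ[ℂ] A ⊗[ℂ] A) : Submodule ℂ A :=
  Submodule.span ℂ {y : A | ∃ (a : A) (ω : A →ₗ[ℂ] ℂ), y = sliceR ω (Δ a)}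

/-- The right leg of `Δ`: the span of `{(ω ⊗ id)(Δ a) : a ∈ A, ω ∈ A*}`. -/
def rightLeg (Δ : A →ₐ[ℂ] A ⊗[ℂ] A) : Submodule ℂ A :=
  Submodule.span ℂ {y : A | ∃ (a : A) (ω : A →ₗ[ℂ] ℂ), y = sliceL ω (Δ a)}

/-- A comultiplication is full if both of its legs are all of `A`. -/
def IsFull (Δ : A →ₐ[ℂ] A ⊗[ℂ] A) : Prop :=
  leftLeg Δ = ⊤ ∧ rightLeg Δ = ⊤

/-- The linear map `T₁` with `T₁ (a ⊗ b) = Δ(a) * (1 ⊗ b)`. -/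
def T1 (Δ : A →ₐ[ℂ] A ⊗[ℂ] A) : A ⊗[ℂ] A →ₗ[ℂ] A ⊗[ℂ] A :=
  LinearMap.mul' ℂ (A ⊗[ℂ] A) ∘ₗ
    TensorProduct.map Δ.toLinearMap (TensorProduct.mk ℂ A A 1)

/-- The linear map `T₁'` with `T₁' (a ⊗ b) = Δ(a) * (b ⊗ 1)`. -/
def T1' (Δ : A →ₐ[ℂ] A ⊗[ℂ] A) : A ⊗[ℂ] A →ₗ[ℂ] A ⊗[ℂ] A :=
  LinearMap.mul' ℂ (A ⊗[ℂ] A) ∘ₗ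
    TensorProduct.map Δ.toLinearMap ((TensorProduct.mk ℂ A A).flip 1)

/-- The linear map `T₂` with `T₂ (a ⊗ b) = (a ⊗ 1) * Δ(b)`. -/
def T2 (Δ : A →ₐ[ℂ] A ⊗[ℂ] A) : A ⊗[ℂ] A →ₗ[ℂ] A ⊗[ℂ] A :=
  LinearMap.mul' ℂ (A ⊗[ℂ] A) ∘ₗ
    TensorProduct.map ((TensorProduct.mk ℂ A A).flip 1) Δ.toLinearMap

/-- The linear map `T₂'` with `T₂' (a ⊗ b) = (1 ⊗ a) * Δ(b)`. -/
def T2' (Δ : A →ₐ[ℂ] A ⊗[ℂ] A) : A ⊗[ℂ] A →ₗ[ℂ] A ⊗[ℂ] A :=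
  LinearMap.mul' ℂ (A ⊗[ℂ] A) ∘ₗ
    TensorProduct.map (TensorProduct.mk ℂ A A 1) Δ.toLinearMap

/-- A left cointegral: a nonzero element `h` with `Δ(a)(1 ⊗ h) = a ⊗ h` for all `a`. -/
def IsLeftCointegral (Δ : A →ₐ[ℂ] A ⊗[ℂ] A) (h : A) : Prop :=
  h ≠ 0 ∧ ∀ a : A, Δ a * ((1 : A) ⊗ₜ[ℂ] h) = a ⊗ₜ[ℂ] h

/-- A right cointegral: a nonzero element `k` with `(k ⊗ 1)Δ(a) = k ⊗ a` for all `a`. -/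
def IsRightCointegral (Δ : A →ₐ[ℂ] A ⊗[ℂ] A) (k : A) : Prop :=
  k ≠ 0 ∧ ∀ a : A, (k ⊗ₜ[ℂ] (1 : A)) * Δ a = k ⊗ₜ[ℂ] a

/-- `Δ₁₃(a) = (1 ⊗ σ)(Δ(a) ⊗ 1)`, viewed in `A ⊗ (A ⊗ A)`. -/
def delta13 (Δ : A →ₐ[ℂ] A ⊗[ℂ] A) (a : A) : A ⊗[ℂ] (A ⊗[ℂ] A) :=
  TensorProduct.map LinearMap.id (TensorProduct.comm ℂ A A).toLinearMap
    (TensorProduct.assoc ℂ A A A (Δ a ⊗ₜ[ℂ] (1 : A)))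

/-! ### Auxiliary lemmas for the proof -/

set_option maxHeartbeats 1000000
set_option synthInstance.maxHeartbeats 400000

lemma sliceR_tmul (ω : A →ₗ[ℂ] ℂ) (x y : A) : sliceR ω (x ⊗ₜ[ℂ] y) = ω y • x := by
  simp [sliceR]

lemma sliceL_tmul (ω : A →ₗ[ℂ] ℂ) (x y : A) : sliceL ω (x ⊗ₜ[ℂ] y) = ω x • y := by
  simp [sliceL]

lemma sliceL_mul_one_tmul (ω : A →ₗ[ℂ] ℂ) (w : A ⊗[ℂ] A) (v : A) :
    sliceL ω (w * ((1 : A) ⊗ₜ[ℂ] v)) = sliceL ω w * v := by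
  induction w using TensorProduct.induction_on with
  | zero => simp
  | tmul p q =>
      rw [Algebra.TensorProduct.tmul_mul_tmul, mul_one, sliceL_tmul, sliceL_tmul,
        smul_mul_assoc]
  | add s t hs ht =>
      simp only [add_mul, map_add]
      rw [hs, ht]

lemma sliceR_tmul_one_mul (ω : A →ₗ[ℂ] ℂ) (w : A) (t : A ⊗[ℂ] A) :
    sliceR ω ((w ⊗ₜ[ℂ] (1 : A)) * t) = w * sliceR ω t := by
  induction t using TensorProduct.induction_on with
  | zero => simp
  | tmul p q =>
      rw [Algebra.TensorProduct.tmul_mul_tmul, one_mul, sliceR_tmul, sliceR_tmul,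
        mul_smul_comm]
  | add s t hs ht =>
      simp only [mul_add, map_add]
      rw [hs, ht]

lemma sliceR_mul_tmul_one (ω : A →ₗ[ℂ] ℂ) (t : A ⊗[ℂ] A) (p : A) :
    sliceR ω (t * (p ⊗ₜ[ℂ] (1 : A))) = sliceR ω t * p := by
  induction t using TensorProduct.induction_on with
  | zero => simp
  | tmul x y =>
      rw [Algebra.TensorProduct.tmul_mul_tmul, mul_one, sliceR_tmul, sliceR_tmul,
        smul_mul_assoc]
  | add s t hs ht =>
      simp only [add_mul, map_add]
      rw [hs, ht]

lemma slice_swap (f g : A →ₗ[ℂ] ℂ) (x : A ⊗[ℂ] A) :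
    f (sliceR g x) = g (sliceL f x) := by
  induction x using TensorProduct.induction_on with
  | zero => simp
  | tmul u v =>
      rw [sliceR_tmul, sliceL_tmul, map_smul, map_smul, smul_eq_mul, smul_eq_mul, mul_comm]
  | add s t hs ht =>
      simp only [map_add]
      rw [hs, ht]

lemma sliceL_lTensor (ω : A →ₗ[ℂ] ℂ) (f : A →ₗ[ℂ] A) (t : A ⊗[ℂ] A) :
    sliceL ω (LinearMap.lTensor A f t) = f (sliceL ω t) := by
  induction t using TensorProduct.induction_on with
  | zero => simp
  | tmul p q => rw [LinearMap.lTensor_tmul, sliceL_tmul, sliceL_tmul, map_smul]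
  | add s t hs ht =>
      simp only [map_add]
      rw [hs, ht]

/-- Separation: if all left slices by functionals `ψ(e·–)` of a tensor vanish and `ψ` is
faithful, the tensor is zero. -/
lemma sep_of_faithful (ψ : A →ₗ[ℂ] ℂ) (hψf : IsFaithful ψ) (x : A ⊗[ℂ] A)
    (h : ∀ e : A, sliceL (ψ ∘ₗ LinearMap.mulLeft ℂ e) x = 0) : x = 0 := by
  classical
  set B := Module.Basis.ofVectorSpace ℂ A with hB
  have hu : ∀ j, sliceR (B.coord j) x = 0 := by
    intro j
    apply hψf.1
    intro e
    have h2 := slice_swap (ψ ∘ₗ LinearMap.mulLeft ℂ e) (B.coord j) x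
    rw [h e, map_zero] at h2
    simpa using h2
  have key : ∀ (y : A ⊗[ℂ] A) (i j : Module.Basis.ofVectorSpaceIndex ℂ A),
      ((B.tensorProduct B).repr y) (i, j) = B.coord i (sliceR (B.coord j) y) := by
    intro y
    induction y using TensorProduct.induction_on with
    | zero => simp
    | tmul u v =>
        intro i j
        rw [sliceR_tmul, map_smul, Module.Basis.tensorProduct_repr_tmul_apply]
        simp [Module.Basis.coord_apply, smul_eq_mul]
    | add s t hs ht =>
        intro i j
        simp only [map_add, Finsupp.add_apply]
        rw [hs, ht]
  have hrepr : (B.tensorProduct B).repr x = 0 := by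
    ext p
    obtain ⟨i, j⟩ := p
    rw [key x i j, hu j, map_zero]
    rfl
  exact (LinearEquiv.map_eq_zero_iff _).mp hrepr

section Engine

variable (Δ : A →ₐ[ℂ] A ⊗[ℂ] A) (φ ψ : A →ₗ[ℂ] ℂ)

/-- `lam Δ ψ c : u ↦ (ψ ⊗ id)(Δ(c)(u ⊗ 1)) = Σ ψ(c₁ u) c₂`. -/
def lam (c : A) : A →ₗ[ℂ] A :=
  sliceL ψ ∘ₗ LinearMap.mulLeft ℂ (Δ c) ∘ₗ ((TensorProduct.mk ℂ A A).flip 1)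

lemma lam_apply (c u : A) : lam Δ ψ c u = sliceL ψ (Δ c * (u ⊗ₜ[ℂ] (1 : A))) := rfl

/-- `rho Δ ψ e : x ↦ Σ ψ(e x₁) x₂`. -/
def rho (e : A) : A →ₗ[ℂ] A :=
  sliceL (ψ ∘ₗ LinearMap.mulLeft ℂ e) ∘ₗ Δ.toLinearMap

lemma rho_apply (e x : A) :
    rho Δ ψ e x = sliceL (ψ ∘ₗ LinearMap.mulLeft ℂ e) (Δ x) := rfl

/-- The map `x ⊗ y ⊗ z ↦ (Λ x)·y ⊗ z` on `A ⊗ (A ⊗ A)`. -/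
def Xi (Λ : A →ₗ[ℂ] A) : A ⊗[ℂ] (A ⊗[ℂ] A) →ₗ[ℂ] A ⊗[ℂ] A :=
  (TensorProduct.map (LinearMap.mul' ℂ A) LinearMap.id) ∘ₗ
    (TensorProduct.assoc ℂ A A A).symm.toLinearMap ∘ₗ (TensorProduct.map Λ LinearMap.id)

lemma Xi_tmul (Λ : A →ₗ[ℂ] A) (x y z : A) :
    Xi Λ (x ⊗ₜ[ℂ] (y ⊗ₜ[ℂ] z)) = (Λ x * y) ⊗ₜ[ℂ] z := by
  simp [Xi]

lemma Xi_mul_one_tmul (Λ : A →ₗ[ℂ] A) (u : A ⊗[ℂ] (A ⊗[ℂ] A)) (v : A ⊗[ℂ] A) :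
    Xi Λ (u * ((1 : A) ⊗ₜ[ℂ] v)) = Xi Λ u * v := by
  induction u using TensorProduct.induction_on with
  | zero => simp
  | add s t hs ht =>
      simp only [add_mul, map_add]
      rw [hs, ht]
  | tmul x w =>
    rw [Algebra.TensorProduct.tmul_mul_tmul, mul_one]
    induction w using TensorProduct.induction_on with
    | zero => simp
    | add s t hs ht =>
        simp only [add_mul, TensorProduct.tmul_add, map_add]
        rw [hs, ht]
    | tmul y z =>
      rw [Xi_tmul]
      induction v using TensorProduct.induction_on with
      | zero => simp
      | add s t hs ht =>
          simp only [mul_add, TensorProduct.tmul_add, map_add]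
          rw [hs, ht]
      | tmul p q =>
        rw [Algebra.TensorProduct.tmul_mul_tmul, Xi_tmul,
          Algebra.TensorProduct.tmul_mul_tmul, mul_assoc]

lemma Xi_tmul_right (Λ : A →ₗ[ℂ] A) (x : A) (s : A ⊗[ℂ] A) :
    Xi Λ (x ⊗ₜ[ℂ] s) = ((Λ x) ⊗ₜ[ℂ] (1 : A)) * s := by
  induction s using TensorProduct.induction_on with
  | zero => simp
  | add s t hs ht =>
      simp only [TensorProduct.tmul_add, map_add, mul_add]
      rw [hs, ht]
  | tmul p q =>
      rw [Xi_tmul, Algebra.TensorProduct.tmul_mul_tmul, one_mul]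

lemma mul'_map_lam (c : A) (t : A ⊗[ℂ] A) :
    LinearMap.mul' ℂ A (TensorProduct.map (lam Δ ψ c) LinearMap.id t) =
      sliceL ψ (Δ c * t) := by
  induction t using TensorProduct.induction_on with
  | zero => simp
  | add s t hs ht =>
      simp only [map_add, mul_add]
      rw [hs, ht]
  | tmul u v =>
    rw [TensorProduct.map_tmul, LinearMap.mul'_apply, LinearMap.id_coe, id_eq, lam_apply]
    have h1 : Δ c * (u ⊗ₜ[ℂ] v) = (Δ c * (u ⊗ₜ[ℂ] (1 : A))) * ((1 : A) ⊗ₜ[ℂ] v) := by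
      rw [mul_assoc, Algebra.TensorProduct.tmul_mul_tmul, mul_one, one_mul]
    rw [h1, sliceL_mul_one_tmul]

/-- `eta ψ c : x ↦ ψ(c x) • 1`. -/
def eta (c : A) : A →ₗ[ℂ] A :=
  LinearMap.toSpanSingleton ℂ A 1 ∘ₗ ψ ∘ₗ LinearMap.mulLeft ℂ c

lemma eta_apply (c x : A) : eta ψ c x = ψ (c * x) • (1 : A) := rfl

lemma map_eta (c : A) (t : A ⊗[ℂ] A) :
    TensorProduct.map (eta ψ c) LinearMap.id t =
      (1 : A) ⊗ₜ[ℂ] sliceL (ψ ∘ₗ LinearMap.mulLeft ℂ c) t := by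
  induction t using TensorProduct.induction_on with
  | zero => simp
  | add s t hs ht =>
      simp only [map_add, TensorProduct.tmul_add]
      rw [hs, ht]
  | tmul x y =>
    rw [TensorProduct.map_tmul, sliceL_tmul, LinearMap.id_coe, id_eq, eta_apply]
    rw [TensorProduct.smul_tmul]
    rfl

/-- The key collapsing identity: applying `Xi (lam Δ ψ c)` to `(id ⊗ Δ)(Δ x)` gives
`1 ⊗ rho Δ ψ c x`, by coassociativity and right invariance of `ψ`. -/
lemma Xi_map_coassoc (hΔ : IsCoassoc Δ) (hψi : IsRightIntegral Δ ψ) (c x : A) :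
    Xi (lam Δ ψ c) (TensorProduct.map LinearMap.id Δ.toLinearMap (Δ x)) =
      (1 : A) ⊗ₜ[ℂ] (rho Δ ψ c x) := by
  rw [← hΔ x]
  have comp1 : ∀ t : (A ⊗[ℂ] A) ⊗[ℂ] A,
      Xi (lam Δ ψ c) ((TensorProduct.assoc ℂ A A A) t) =
        TensorProduct.map
          (LinearMap.mul' ℂ A ∘ₗ TensorProduct.map (lam Δ ψ c) LinearMap.id)
          LinearMap.id t := by
    intro t
    induction t using TensorProduct.induction_on with
    | zero => simp
    | add s t hs ht =>
        simp only [map_add]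
        rw [hs, ht]
    | tmul u z =>
      induction u using TensorProduct.induction_on with
      | zero => simp [TensorProduct.zero_tmul]
      | add s t hs ht =>
          simp only [TensorProduct.add_tmul, map_add]
          rw [hs, ht]
      | tmul p q =>
          rw [TensorProduct.assoc_tmul, Xi_tmul, TensorProduct.map_tmul,
            LinearMap.comp_apply, TensorProduct.map_tmul, LinearMap.mul'_apply]
          rfl
  rw [comp1]
  have comp2 : ∀ t : A ⊗[ℂ] A,
      TensorProduct.map
          (LinearMap.mul' ℂ A ∘ₗ TensorProduct.map (lam Δ ψ c) LinearMap.id)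
          LinearMap.id (TensorProduct.map Δ.toLinearMap LinearMap.id t) =
        TensorProduct.map (eta ψ c) LinearMap.id t := by
    intro t
    induction t using TensorProduct.induction_on with
    | zero => simp
    | add s t hs ht =>
        simp only [map_add]
        rw [hs, ht]
    | tmul p q =>
      rw [TensorProduct.map_tmul, TensorProduct.map_tmul, TensorProduct.map_tmul]
      have hF : (LinearMap.mul' ℂ A ∘ₗ TensorProduct.map (lam Δ ψ c) LinearMap.id)
          (Δ.toLinearMap p) = eta ψ c p := by
        rw [LinearMap.comp_apply, AlgHom.toLinearMap_apply, mul'_map_lam, ← map_mul,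
          hψi.2, eta_apply]
      rw [hF]
      rfl
  rw [comp2, map_eta]
  rfl

lemma slice_one_tmul_mul (e u : A) (t : A ⊗[ℂ] A) :
    ψ (e * sliceR φ (((1 : A) ⊗ₜ[ℂ] u) * t)) =
      φ (u * sliceL (ψ ∘ₗ LinearMap.mulLeft ℂ e) t) := by
  induction t using TensorProduct.induction_on with
  | zero => simp
  | add s t hs ht =>
      simp only [mul_add, map_add]
      rw [hs, ht]
  | tmul p q =>
    rw [Algebra.TensorProduct.tmul_mul_tmul, one_mul, sliceR_tmul, sliceL_tmul,
      mul_smul_comm, map_smul, LinearMap.comp_apply, LinearMap.mulLeft_apply,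
      mul_smul_comm, map_smul, smul_eq_mul, smul_eq_mul, mul_comm]

lemma slice_exchange (c u : A) (t : A ⊗[ℂ] A) :
    φ (sliceL (ψ ∘ₗ LinearMap.mulLeft ℂ c) t * u) =
      ψ (c * sliceR φ (t * ((1 : A) ⊗ₜ[ℂ] u))) := by
  induction t using TensorProduct.induction_on with
  | zero => simp
  | add s t hs ht =>
      simp only [map_add, add_mul, mul_add]
      rw [hs, ht]
  | tmul p q =>
    rw [Algebra.TensorProduct.tmul_mul_tmul, mul_one, sliceL_tmul, sliceR_tmul,
      smul_mul_assoc, map_smul, mul_smul_comm, map_smul, LinearMap.comp_apply,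
      LinearMap.mulLeft_apply, smul_eq_mul, smul_eq_mul, mul_comm]

lemma wayII (hφi : IsLeftIntegral Δ φ) (c e : A) (t : A ⊗[ℂ] A) :
    ψ (e * sliceR φ (Xi (lam Δ ψ c) (TensorProduct.map LinearMap.id Δ.toLinearMap t))) =
      ψ (e * lam Δ ψ c (sliceR φ t)) := by
  induction t using TensorProduct.induction_on with
  | zero => simp
  | add s t hs ht =>
      simp only [map_add, mul_add]
      rw [hs, ht]
  | tmul x y =>
    rw [TensorProduct.map_tmul, Xi_tmul_right, sliceR_tmul_one_mul,
      AlgHom.toLinearMap_apply, hφi.2, sliceR_tmul]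
    simp only [LinearMap.id_coe, id_eq, map_smul, mul_smul_comm, mul_one, smul_eq_mul]

lemma map_id_delta_eq (z : A ⊗[ℂ] A) :
    TensorProduct.map LinearMap.id Δ.toLinearMap z =
      (Algebra.TensorProduct.map (AlgHom.id ℂ A) Δ) z := by
  induction z using TensorProduct.induction_on with
  | zero => simp
  | add s t hs ht =>
      simp only [map_add]
      rw [hs, ht]
  | tmul p q =>
      rw [TensorProduct.map_tmul, Algebra.TensorProduct.map_tmul]
      rfl

end Engine

/-- If `Σᵢ (id ⊗ φ)(Δ(aᵢ)(1 ⊗ bᵢ)) = 0`, then `Σᵢ φ(aᵢbᵢ) = 0`. -/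
theorem sum_phi_eq_zero_of_sum_slice_eq_zero
    (Δ : A →ₐ[ℂ] A ⊗[ℂ] A) (hΔ : IsCoassoc Δ) (hfull : IsFull Δ)
    (φ : A →ₗ[ℂ] ℂ) (hφ : IsLeftIntegral Δ φ) (hφf : IsFaithful φ)
    (ψ : A →ₗ[ℂ] ℂ) (hψ : IsRightIntegral Δ ψ) (hψf : IsFaithful ψ)
    (n : ℕ) (a b : Fin n → A)
    (h0 : ∑ i, sliceR φ (Δ (a i) * ((1 : A) ⊗ₜ[ℂ] b i)) = 0) :
    ∑ i, φ (a i * b i) = 0 := by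
  classical
  set H : Fin n → (A →ₗ[ℂ] A) := fun i =>
    sliceR φ ∘ₗ LinearMap.mulLeft ℂ (Δ (a i)) ∘ₗ TensorProduct.mk ℂ A A 1 with hH
  have hHapply : ∀ (i : Fin n) (u : A),
      H i u = sliceR φ (Δ (a i) * ((1 : A) ⊗ₜ[ℂ] u)) := by
    intro i u; rfl
  have hX : sliceR φ (∑ i, Δ (a i) * ((1 : A) ⊗ₜ[ℂ] b i)) = 0 := by
    rw [map_sum]; exact h0
  have hY : ∀ e : A, ∑ i, H i (rho Δ ψ e (b i)) = 0 := by
    intro e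
    apply hψf.1
    intro c
    have key_i : ∀ i : Fin n,
        ψ (c * H i (rho Δ ψ e (b i))) =
          ψ (e * sliceR φ (Xi (lam Δ ψ c)
            (TensorProduct.map LinearMap.id Δ.toLinearMap
              (Δ (a i) * ((1 : A) ⊗ₜ[ℂ] b i))))) := by
      intro i
      have e1 : ψ (c * H i (rho Δ ψ e (b i))) =
          φ (rho Δ ψ c (a i) * rho Δ ψ e (b i)) := by
        rw [hHapply, rho_apply Δ ψ c (a i), slice_exchange φ ψ c _ (Δ (a i))]
      have e2 : TensorProduct.map LinearMap.id Δ.toLinearMap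
            (Δ (a i) * ((1 : A) ⊗ₜ[ℂ] b i)) =
          TensorProduct.map LinearMap.id Δ.toLinearMap (Δ (a i)) *
            ((1 : A) ⊗ₜ[ℂ] Δ (b i)) := by
        simp only [map_id_delta_eq]
        rw [map_mul]
        congr 1
      rw [e1, e2, Xi_mul_one_tmul, Xi_map_coassoc Δ ψ hΔ hψ c (a i),
        slice_one_tmul_mul φ ψ e _ (Δ (b i)), rho_apply Δ ψ e (b i)]
    calc ψ (c * ∑ i, H i (rho Δ ψ e (b i)))
        = ∑ i, ψ (c * H i (rho Δ ψ e (b i))) := by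
          rw [Finset.mul_sum, map_sum]
      _ = ∑ i, ψ (e * sliceR φ (Xi (lam Δ ψ c)
            (TensorProduct.map LinearMap.id Δ.toLinearMap
              (Δ (a i) * ((1 : A) ⊗ₜ[ℂ] b i))))) :=
          Finset.sum_congr rfl (fun i _ => key_i i)
      _ = ψ (e * sliceR φ (Xi (lam Δ ψ c)
            (TensorProduct.map LinearMap.id Δ.toLinearMap
              (∑ i, Δ (a i) * ((1 : A) ⊗ₜ[ℂ] b i))))) := by
          rw [map_sum, map_sum, map_sum, Finset.mul_sum, map_sum]
      _ = ψ (e * lam Δ ψ c (sliceR φ (∑ i, Δ (a i) * ((1 : A) ⊗ₜ[ℂ] b i)))) :=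
          wayII Δ φ ψ hφ c e _
      _ = 0 := by rw [hX, map_zero, mul_zero, map_zero]
  have hV : (∑ i, LinearMap.lTensor A (H i) (Δ (b i))) = 0 := by
    apply sep_of_faithful ψ hψf
    intro e
    rw [map_sum]
    have hterm : ∀ i : Fin n, sliceL (ψ ∘ₗ LinearMap.mulLeft ℂ e)
        (LinearMap.lTensor A (H i) (Δ (b i))) = H i (rho Δ ψ e (b i)) := by
      intro i
      rw [sliceL_lTensor, rho_apply]
    rw [Finset.sum_congr rfl (fun i _ => hterm i)]
    exact hY e
  have hfin : ∀ (i : Fin n) (t : A ⊗[ℂ] A),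
      LinearMap.mul' ℂ A ((TensorProduct.comm ℂ A A) (LinearMap.lTensor A (H i) t)) =
        sliceR φ (Δ (a i) * t) := by
    intro i t
    induction t using TensorProduct.induction_on with
    | zero => simp
    | add s t hs ht => rw [map_add, map_add, map_add, hs, ht, mul_add, map_add]
    | tmul p q =>
      rw [LinearMap.lTensor_tmul, TensorProduct.comm_tmul, LinearMap.mul'_apply, hHapply,
        ← sliceR_mul_tmul_one φ _ p]
      congr 1
      rw [mul_assoc, Algebra.TensorProduct.tmul_mul_tmul, one_mul, mul_one]
  have hsum : (∑ i, φ (a i * b i)) • (1 : A) = 0 := by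
    have h1 := congrArg (fun z => LinearMap.mul' ℂ A ((TensorProduct.comm ℂ A A) z)) hV
    simp only [map_sum, map_zero] at h1
    calc (∑ i, φ (a i * b i)) • (1 : A)
        = ∑ i, φ (a i * b i) • (1 : A) := Finset.sum_smul
      _ = ∑ i, sliceR φ (Δ (a i) * Δ (b i)) := by
          refine Finset.sum_congr rfl (fun i _ => ?_)
          rw [← map_mul, hφ.2]
      _ = ∑ i, LinearMap.mul' ℂ A ((TensorProduct.comm ℂ A A)
            (LinearMap.lTensor A (H i) (Δ (b i)))) :=
          Finset.sum_congr rfl (fun i _ => (hfin i (Δ (b i))).symm)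
      _ = 0 := h1
  have hone : (1 : A) ≠ 0 := by
    intro h1
    apply hφ.1
    apply LinearMap.ext
    intro x
    have hx : x = 0 := by rw [← mul_one x, h1, mul_zero]
    rw [hx]; simp
  by_contra hs
  exact hone (by
    rw [← one_smul ℂ (1 : A), ← inv_mul_cancel₀ hs, mul_smul, hsum, smul_zero])
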